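/- Let ε > 0 and let g₀ ≤ h₀ (pointwise) be left-continuous non-increasing functions from (0,∞) into [0,ω₁) with finite ranges that vanish beyond some A < ∞. Let (g_i)_{i=0}^{n}, (γ_i)_{i=0}^{n−1} and (h_i)_{i=0}^{m}, (η_i)_{i=0}^{m−1} be the sequences produced by applying the greedy ε-compression procedure to g₀ and to h₀, respectively. Then Σ_{i=0}^{n−1} γ_i + g_n(t) ≤ Σ_{i=0}^{m−1} η_i + h_m(t) (ordinal sums, summed in order of increasing index) for all t with 0 < t ≤ ε; and if moreover λ({t : g₀(t)+1 ≤ h₀(t)}) ≥ ε, then Σ_{i=0}^{n−1} γ_i + g_n(ε) + 1 ≤ Σ_{i=0}^{m−1} η_i + h_m(ε). -/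

import Mathlib

open MeasureTheory Set Ordinal Filter
open scoped Classical

/-- `g` is non-increasing on `(0,∞)`. -/
def NonIncr (g : ℝ → Ordinal) : Prop := ∀ s t : ℝ, 0 < s → s ≤ t → g t ≤ g s

/-- `g` is left continuous on `(0,∞)`; for non-increasing ordinal-valued
functions this is equivalent to being locally constant from the left. -/
def LeftCont (g : ℝ → Ordinal) : Prop :=
  ∀ t : ℝ, 0 < t → ∃ δ > 0, ∀ s : ℝ, t - δ < s → s ≤ t → g s = g t

/-- `g` has finite range on `(0,∞)`. -/
def FiniteRange (g : ℝ → Ordinal) : Prop := (g '' Set.Ioi (0:ℝ)).Finite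

/-- `g` takes values in `[0,ω₁)`, the countable ordinals. -/
def CountableValued (g : ℝ → Ordinal) : Prop := ∀ t : ℝ, 0 < t → g t < ω₁

/-- `g` vanishes beyond `A`. -/
def VanishesBeyond (g : ℝ → Ordinal) (A : ℝ) : Prop := ∀ t : ℝ, A < t → g t = 0

/-- The level set `{t ∈ (0,∞) : g t = α}`. -/
def lev (g : ℝ → Ordinal) (α : Ordinal) : Set ℝ := {t | 0 < t ∧ g t = α}

/-- `G` is the non-increasing left-continuous rearrangement of `u`: it is
non-increasing, left continuous, and each nonzero level set has the same
Lebesgue measure as that of `u`. -/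
def IsRearrangement (G u : ℝ → Ordinal) : Prop :=
  NonIncr G ∧ LeftCont G ∧ ∀ α : Ordinal, 0 < α → volume (lev G α) = volume (lev u α)

/-- The function `g − γ·1_I` (pointwise ordinal subtraction on `I`). -/
noncomputable def subInd (g : ℝ → Ordinal) (γ : Ordinal) (I : Set ℝ) : ℝ → Ordinal :=
  fun t => if t ∈ I then g t - γ else g t

/-- The ordered ordinal sum `γ₀ + γ₁ + ⋯ + γ_{n-1}` (in order of increasing index). -/
def osum (γ : ℕ → Ordinal) : ℕ → Ordinal
  | 0 => 0
  | n + 1 => osum γ n + γ n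

/-- One step of the greedy `ε`-compression procedure: `γᵢ` is the largest ordinal of the form
`ω ^ β` with `ω ^ β ≤ gᵢ(ε)`, and `g_{i+1}` is the non-increasing left-continuous rearrangement
of `gᵢ − γᵢ·1_{(0,ε]}`; the procedure stops at the first index where the value at `ε` is `0`. -/
def GreedyProcedure (ε : ℝ) (g : ℕ → ℝ → Ordinal) (γ : ℕ → Ordinal) (n : ℕ) : Prop :=
  (∀ i < n, g i ε ≠ 0) ∧ g n ε = 0 ∧
  (∀ i < n, (∃ β : Ordinal, γ i = (ω : Ordinal) ^ β) ∧ γ i ≤ g i ε ∧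
      (∀ β : Ordinal, (ω : Ordinal) ^ β ≤ g i ε → (ω : Ordinal) ^ β ≤ γ i)) ∧
  (∀ i < n, IsRearrangement (g (i + 1)) (subInd (g i) (γ i) (Set.Ioc 0 ε)))
-- ===== Part 1: ordinal helpers, ENNReal helpers =====
lemma ord_sub_le_sub {a b : Ordinal} (h : a ≤ b) (c : Ordinal) : a - c ≤ b - c := by
  rw [Ordinal.sub_le]; exact h.trans (Ordinal.le_add_sub b c)

lemma ord_le_sub_iff {x γ α : Ordinal} (h : γ ≤ x) : α ≤ x - γ ↔ γ + α ≤ x := by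
  constructor
  · intro h2
    calc γ + α ≤ γ + (x - γ) := add_le_add_right h2 γ
      _ = x := Ordinal.add_sub_cancel_of_le h
  · intro h2
    have h3 : γ + α - γ ≤ x - γ := ord_sub_le_sub h2 γ
    rwa [Ordinal.add_sub_cancel] at h3

lemma ord_sub_eq_iff {x γ β : Ordinal} (h : γ ≤ x) : x - γ = β ↔ x = γ + β := by
  constructor
  · intro h2; rw [← h2, Ordinal.add_sub_cancel_of_le h]
  · intro h2; rw [h2, Ordinal.add_sub_cancel]

lemma ord_sub_lt_sub_iff {x y γ : Ordinal} (hx : γ ≤ x) (hy : γ ≤ y) :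
    x - γ < y - γ ↔ x < y := by
  conv_rhs => rw [← Ordinal.add_sub_cancel_of_le hx, ← Ordinal.add_sub_cancel_of_le hy]
  exact (add_lt_add_iff_left γ).symm

open scoped ENNReal in
lemma min_add_tsub (a e : ℝ≥0∞) : min a e + (a - e) = a := by
  rcases le_total a e with h | h
  · simp [min_eq_left h, tsub_eq_zero_of_le h]
  · rw [min_eq_right h, add_comm]; exact tsub_add_cancel_of_le h

-- ===== Part 2: superlevel sets =====
/-- superlevel set -/
def SupS (f : ℝ → Ordinal) (α : Ordinal) : Set ℝ := {t | 0 < t ∧ α ≤ f t}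

structure Good (f : ℝ → Ordinal) : Prop where
  ni : NonIncr f
  lc : LeftCont f
  fr : FiniteRange f
  bdd : ∀ α : Ordinal, 0 < α → volume (SupS f α) ≠ ⊤

lemma SupS_zero (f : ℝ → Ordinal) : SupS f 0 = Set.Ioi 0 := by
  ext t; simp [SupS, Set.mem_Ioi, zero_le]

lemma SupS_anti (f : ℝ → Ordinal) {α β : Ordinal} (h : α ≤ β) : SupS f β ⊆ SupS f α :=
  fun t ht => ⟨ht.1, h.trans ht.2⟩

lemma SupS_mono {f F : ℝ → Ordinal} (h : ∀ t, 0 < t → f t ≤ F t) (α : Ordinal) :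
    SupS f α ⊆ SupS F α := fun t ht => ⟨ht.1, ht.2.trans (h t ht.1)⟩

lemma SupS_downclosed {f : ℝ → Ordinal} (hf : NonIncr f) {α : Ordinal} {s t : ℝ}
    (hs : 0 < s) (hst : s ≤ t) (ht : t ∈ SupS f α) : s ∈ SupS f α :=
  ⟨hs, ht.2.trans (hf s t hs hst)⟩

/-- A nonempty bounded-above downclosed superlevel set of a left continuous
nonincreasing function is an `Ioc`. -/
lemma good_exists_Ioc {f : ℝ → Ordinal} (hf : Good f) {α : Ordinal} (hα : 0 < α) :
    ∃ b : ℝ, 0 ≤ b ∧ SupS f α = Set.Ioc 0 b := by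
  rcases Set.eq_empty_or_nonempty (SupS f α) with he | hne
  · exact ⟨0, le_refl 0, by rw [he]; simp⟩
  have hbdd : BddAbove (SupS f α) := by
    by_contra hb
    have hfin := hf.bdd α hα
    set v := volume (SupS f α) with hv
    have hx : ENNReal.ofReal (v.toReal + 1) ≤ v := by
      rcases not_bddAbove_iff.1 hb (v.toReal + 1) with ⟨s, hs, hxs⟩
      have hsub : Set.Ioc 0 (v.toReal + 1) ⊆ SupS f α := fun y hy =>
        SupS_downclosed hf.ni hy.1 (hy.2.trans hxs.le) hs
      calc ENNReal.ofReal (v.toReal + 1) = volume (Set.Ioc (0:ℝ) (v.toReal + 1)) := by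
            simp [Real.volume_Ioc]
        _ ≤ v := measure_mono hsub
    have hlt : v < ENNReal.ofReal (v.toReal + 1) := by
      conv_lhs => rw [← ENNReal.ofReal_toReal hfin]
      exact ENNReal.ofReal_lt_ofReal_iff (by positivity) |>.2 (lt_add_one _)
    exact absurd hx (not_le.2 hlt)
  obtain ⟨t0, ht0⟩ := hne
  set b := sSup (SupS f α) with hbdef
  have hb_mem : b ∈ SupS f α := by
    have hb_pos : 0 < b := lt_of_lt_of_le ht0.1 (le_csSup hbdd ht0)
    obtain ⟨δ, hδ, hδc⟩ := hf.lc b hb_pos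
    obtain ⟨s, hs, hslt⟩ := exists_lt_of_lt_csSup ⟨t0, ht0⟩ (by linarith : b - δ < b)
    have hsb : s ≤ b := le_csSup hbdd hs
    have : f s = f b := hδc s hslt hsb
    exact ⟨hb_pos, by rw [← this]; exact hs.2⟩
  refine ⟨b, le_of_lt hb_mem.1, ?_⟩
  ext t
  constructor
  · intro ht; exact ⟨ht.1, le_csSup hbdd ht⟩
  · intro ht; exact SupS_downclosed hf.ni ht.1 ht.2 hb_mem
-- ===== Part 2b: consequences =====
open scoped ENNReal

lemma good_vol_sup {f : ℝ → Ordinal} (hf : Good f) {α : Ordinal} (hα : 0 < α)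
    {b : ℝ} (hb : 0 ≤ b) (hIoc : SupS f α = Set.Ioc 0 b) :
    volume (SupS f α) = ENNReal.ofReal b := by
  rw [hIoc]; simp [Real.volume_Ioc]

lemma mem_sup_iff {f : ℝ → Ordinal} (hf : Good f) {α : Ordinal} (hα : 0 < α)
    {t : ℝ} (ht : 0 < t) :
    α ≤ f t ↔ ENNReal.ofReal t ≤ volume (SupS f α) := by
  obtain ⟨b, hb, hIoc⟩ := good_exists_Ioc hf hα
  rw [good_vol_sup hf hα hb hIoc]
  constructor
  · intro h2
    have : t ∈ Set.Ioc 0 b := by rw [← hIoc]; exact ⟨ht, h2⟩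
    exact ENNReal.ofReal_le_ofReal this.2
  · intro h2
    have htb : t ≤ b := (ENNReal.ofReal_le_ofReal_iff hb).1 h2
    have : t ∈ SupS f α := by rw [hIoc]; exact ⟨ht, htb⟩
    exact this.2

lemma not_mem_sup_iff {f : ℝ → Ordinal} (hf : Good f) {α : Ordinal} (hα : 0 < α)
    {t : ℝ} (ht : 0 < t) :
    f t < α ↔ volume (SupS f α) < ENNReal.ofReal t := by
  rw [← not_le, ← not_le, mem_sup_iff hf hα ht]

lemma downclosed_measurable {S : Set ℝ} (hS : S ⊆ Set.Ioi 0)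
    (hdc : ∀ ⦃s t : ℝ⦄, 0 < s → s ≤ t → t ∈ S → s ∈ S) : MeasurableSet S := by
  rcases Set.eq_empty_or_nonempty S with he | hne
  · rw [he]; exact MeasurableSet.empty
  by_cases hbdd : BddAbove S
  · set b := sSup S
    have h1 : Set.Ioo 0 b ⊆ S := by
      intro t ht
      obtain ⟨s, hs, hts⟩ := exists_lt_of_lt_csSup hne ht.2
      exact hdc ht.1 hts.le hs
    have h2 : S ⊆ Set.Ioc 0 b := fun t ht => ⟨hS ht, le_csSup hbdd ht⟩
    have h3 : S = Set.Ioo 0 b ∪ (S \ Set.Ioo 0 b) := by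
      rw [Set.union_diff_cancel' (le_refl _) h1]
    rw [h3]
    refine measurableSet_Ioo.union (Set.Countable.measurableSet ?_)
    have : S \ Set.Ioo 0 b ⊆ {b} := by
      intro t ht
      have := h2 ht.1
      have h4 := ht.2
      simp only [Set.mem_Ioo, not_and, not_lt] at h4
      exact Set.mem_singleton_iff.2 (le_antisymm this.2 (h4 this.1))
    exact Set.Countable.mono this (Set.countable_singleton b)
  · have : S = Set.Ioi 0 := by
      refine Set.Subset.antisymm hS ?_
      intro t ht
      rcases not_bddAbove_iff.1 hbdd t with ⟨s, hs, hts⟩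
      exact hdc ht hts.le hs
    rw [this]; exact measurableSet_Ioi

lemma supS_measurable {f : ℝ → Ordinal} (hni : NonIncr f) (α : Ordinal) :
    MeasurableSet (SupS f α) :=
  downclosed_measurable (fun t ht => ht.1) (fun s t hs hst ht => SupS_downclosed hni hs hst ht)

lemma lev_eq_diff (f : ℝ → Ordinal) (β : Ordinal) :
    lev f β = SupS f β \ SupS f (β + 1) := by
  ext t
  simp only [lev, SupS, Set.mem_diff, Set.mem_setOf_eq, not_and, not_le]
  constructor
  · rintro ⟨ht, rfl⟩
    exact ⟨⟨ht, le_refl _⟩, fun _ => Order.lt_add_one_iff.2 (le_refl _)⟩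
  · rintro ⟨⟨ht, h1⟩, h2⟩
    exact ⟨ht, le_antisymm (Order.lt_add_one_iff.1 (h2 ht)) h1⟩

lemma lev_measurable {f : ℝ → Ordinal} (hni : NonIncr f) (β : Ordinal) :
    MeasurableSet (lev f β) := by
  rw [lev_eq_diff]; exact (supS_measurable hni β).diff (supS_measurable hni (β + 1))

lemma lev_disjoint (f : ℝ → Ordinal) {β β' : Ordinal} (h : β ≠ β') :
    Disjoint (lev f β) (lev f β') := by
  rw [Set.disjoint_left]
  rintro t ⟨ht, h1⟩ ⟨ht', h2⟩
  exact h (h1.symm.trans h2)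

lemma lev_pos_of_nonempty {f : ℝ → Ordinal} (hni : NonIncr f) (hlc : LeftCont f)
    {β : Ordinal} (hne : (lev f β).Nonempty) : 0 < volume (lev f β) := by
  obtain ⟨t, ht, htv⟩ := hne
  obtain ⟨δ, hδ, hδc⟩ := hlc t ht
  set s := max (t - δ / 2) (t / 2) with hs
  have hs_pos : 0 < s := lt_max_of_lt_right (by linarith)
  have hs_lt : s < t := max_lt (by linarith) (by linarith)
  have hs_gt : t - δ < s := lt_max_of_lt_left (by linarith)
  have hsub : Set.Ioc s t ⊆ lev f β := by
    intro x hx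
    have hx_pos : 0 < x := hs_pos.trans hx.1
    have h1 : f t ≤ f x := hni x t hx_pos hx.2
    have h2 : f x ≤ f s := hni s x hs_pos hx.1.le
    have h3 : f s = f t := hδc s hs_gt hs_lt.le
    refine ⟨hx_pos, le_antisymm ?_ ?_⟩
    · calc f x ≤ f s := h2
        _ = f t := h3
        _ = β := htv
    · calc β = f t := htv.symm
        _ ≤ f x := h1
  calc (0:ℝ≥0∞) < ENNReal.ofReal (t - s) := by
        rw [ENNReal.ofReal_pos]; linarith
    _ = volume (Set.Ioc s t) := (Real.volume_Ioc).symm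
    _ ≤ volume (lev f β) := measure_mono hsub
-- ===== Part 3: rearrangement distribution =====
open scoped ENNReal

lemma rearr_range {G u : ℝ → Ordinal} (hG : IsRearrangement G u)
    {t : ℝ} (ht : 0 < t) (hne : G t ≠ 0) : G t ∈ u '' Set.Ioi 0 := by
  have h1 : 0 < volume (lev G (G t)) :=
    lev_pos_of_nonempty hG.1 hG.2.1 ⟨t, ht, rfl⟩
  rw [hG.2.2 (G t) (pos_iff_ne_zero.2 hne)] at h1
  have h2 : (lev u (G t)).Nonempty := by
    rcases Set.eq_empty_or_nonempty (lev u (G t)) with he | hne2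
    · rw [he] at h1; simp at h1
    · exact hne2
  obtain ⟨s, hs, hsv⟩ := h2
  exact ⟨s, hs, hsv⟩

/-- decomposition of a superlevel set into level sets over a finite covering set -/
lemma sup_eq_biUnion_lev {f : ℝ → Ordinal} {F : Finset Ordinal}
    (hcov : ∀ t : ℝ, 0 < t → f t ≠ 0 → f t ∈ F) {α : Ordinal} (hα : 0 < α) :
    SupS f α = ⋃ β ∈ F.filter (α ≤ ·), lev f β := by
  ext t
  simp only [Set.mem_iUnion, Finset.mem_filter, SupS, Set.mem_setOf_eq, lev]
  constructor
  · rintro ⟨ht, hle⟩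
    exact ⟨f t, ⟨⟨hcov t ht (by intro h0; rw [h0] at hle; exact absurd hle (not_le.2 hα)), hle⟩,
      ht, rfl⟩⟩
  · rintro ⟨β, ⟨hβF, hβle⟩, ht, htv⟩
    exact ⟨ht, htv ▸ hβle⟩

lemma vol_sup_eq_sum {f : ℝ → Ordinal} (hm : ∀ β : Ordinal, MeasurableSet (lev f β))
    {F : Finset Ordinal} (hcov : ∀ t : ℝ, 0 < t → f t ≠ 0 → f t ∈ F)
    {α : Ordinal} (hα : 0 < α) :
    volume (SupS f α) = ∑ β ∈ F.filter (α ≤ ·), volume (lev f β) := by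
  rw [sup_eq_biUnion_lev hcov hα]
  exact measure_biUnion_finset
    (fun β hβ β' hβ' hne => lev_disjoint f hne) (fun β _ => hm β)

lemma rearr_sup_vol {G u : ℝ → Ordinal} (hG : IsRearrangement G u)
    (hufr : (u '' Set.Ioi 0).Finite) (hulev : ∀ β : Ordinal, MeasurableSet (lev u β))
    {α : Ordinal} (hα : 0 < α) :
    volume (SupS G α) = volume (SupS u α) := by
  classical
  set F := hufr.toFinset with hF
  have hcovG : ∀ t : ℝ, 0 < t → G t ≠ 0 → G t ∈ F := by
    intro t ht hne
    rw [hF, Set.Finite.mem_toFinset]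
    exact rearr_range hG ht hne
  have hcovu : ∀ t : ℝ, 0 < t → u t ≠ 0 → u t ∈ F := by
    intro t ht _
    rw [hF, Set.Finite.mem_toFinset]
    exact ⟨t, ht, rfl⟩
  rw [vol_sup_eq_sum (lev_measurable hG.1) hcovG hα, vol_sup_eq_sum hulev hcovu hα]
  refine Finset.sum_congr rfl ?_
  intro β hβ
  have hβpos : 0 < β := lt_of_lt_of_le hα (Finset.mem_filter.1 hβ).2
  exact hG.2.2 β hβpos
-- ===== Part 4: subInd and the STEP lemma =====
open scoped ENNReal

section Step
variable {ε : ℝ} {g : ℝ → Ordinal} {γ : Ordinal}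

lemma subInd_apply_mem {t : ℝ} (ht : t ∈ Set.Ioc 0 ε) :
    subInd g γ (Set.Ioc 0 ε) t = g t - γ := if_pos ht

lemma subInd_apply_not_mem {t : ℝ} (ht : t ∉ Set.Ioc 0 ε) :
    subInd g γ (Set.Ioc 0 ε) t = g t := if_neg ht

lemma gamma_le_on (hni : NonIncr g) (hγ : γ ≤ g ε) {t : ℝ} (ht : 0 < t) (htε : t ≤ ε) :
    γ ≤ g t := hγ.trans (hni t ε ht htε)

lemma sup_subInd (hni : NonIncr g) (hγ : γ ≤ g ε) (hε : 0 < ε) {α : Ordinal} (hα : 0 < α) :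
    SupS (subInd g γ (Set.Ioc 0 ε)) α =
      (Set.Ioc 0 ε ∩ SupS g (γ + α)) ∪ (Set.Ioi ε ∩ SupS g α) := by
  ext t
  simp only [SupS, Set.mem_union, Set.mem_inter_iff, Set.mem_Ioc, Set.mem_Ioi, Set.mem_setOf_eq]
  by_cases htm : t ∈ Set.Ioc 0 ε
  · rw [subInd_apply_mem htm]
    have hγt : γ ≤ g t := gamma_le_on hni hγ htm.1 htm.2
    constructor
    · rintro ⟨ht, hle⟩
      exact Or.inl ⟨htm, ht, (ord_le_sub_iff hγt).1 hle⟩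
    · rintro (⟨_, ht, hle⟩ | ⟨hεt, ht, hle⟩)
      · exact ⟨ht, (ord_le_sub_iff hγt).2 hle⟩
      · exact absurd htm.2 (not_le.2 hεt)
  · rw [subInd_apply_not_mem htm]
    constructor
    · rintro ⟨ht, hle⟩
      refine Or.inr ⟨?_, ht, hle⟩
      simp only [Set.mem_Ioc, not_and, not_le] at htm
      exact htm ht
    · rintro (⟨hmem, ht, hle⟩ | ⟨hεt, ht, hle⟩)
      · exact absurd hmem htm
      · exact ⟨ht, hle⟩

lemma lev_subInd (hni : NonIncr g) (hγ : γ ≤ g ε) (hε : 0 < ε) (β : Ordinal) :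
    lev (subInd g γ (Set.Ioc 0 ε)) β =
      (Set.Ioc 0 ε ∩ lev g (γ + β)) ∪ (Set.Ioi ε ∩ lev g β) := by
  ext t
  simp only [lev, Set.mem_union, Set.mem_inter_iff, Set.mem_Ioc, Set.mem_Ioi, Set.mem_setOf_eq]
  by_cases htm : t ∈ Set.Ioc 0 ε
  · rw [subInd_apply_mem htm]
    have hγt : γ ≤ g t := gamma_le_on hni hγ htm.1 htm.2
    constructor
    · rintro ⟨ht, heq⟩
      exact Or.inl ⟨htm, ht, (ord_sub_eq_iff hγt).1 heq⟩
    · rintro (⟨_, ht, heq⟩ | ⟨hεt, ht, heq⟩)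
      · exact ⟨ht, (ord_sub_eq_iff hγt).2 heq⟩
      · exact absurd htm.2 (not_le.2 hεt)
  · rw [subInd_apply_not_mem htm]
    constructor
    · rintro ⟨ht, heq⟩
      refine Or.inr ⟨?_, ht, heq⟩
      simp only [Set.mem_Ioc, not_and, not_le] at htm
      exact htm ht
    · rintro (⟨hmem, ht, heq⟩ | ⟨hεt, ht, heq⟩)
      · exact absurd hmem htm
      · exact ⟨ht, heq⟩

lemma lev_subInd_measurable (hni : NonIncr g) (hγ : γ ≤ g ε) (hε : 0 < ε) (β : Ordinal) :
    MeasurableSet (lev (subInd g γ (Set.Ioc 0 ε)) β) := by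
  rw [lev_subInd hni hγ hε]
  exact (measurableSet_Ioc.inter (lev_measurable hni _)).union
    (measurableSet_Ioi.inter (lev_measurable hni _))

lemma subInd_fr (hfr : FiniteRange g) :
    ((subInd g γ (Set.Ioc 0 ε)) '' Set.Ioi 0).Finite := by
  have hsub : (subInd g γ (Set.Ioc 0 ε)) '' Set.Ioi 0 ⊆
      (g '' Set.Ioi 0) ∪ ((fun x => x - γ) '' (g '' Set.Ioi 0)) := by
    rintro β ⟨t, ht, rfl⟩
    by_cases htm : t ∈ Set.Ioc 0 ε
    · rw [subInd_apply_mem htm]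
      exact Or.inr ⟨g t, ⟨t, ht, rfl⟩, rfl⟩
    · rw [subInd_apply_not_mem htm]
      exact Or.inl ⟨t, ht, rfl⟩
  exact (hfr.union (hfr.image _)).subset hsub

lemma vol_sup_subInd (hf : Good g) (hγ : γ ≤ g ε) (hε : 0 < ε) {α : Ordinal} (hα : 0 < α) :
    volume (SupS (subInd g γ (Set.Ioc 0 ε)) α) =
      min (volume (SupS g (γ + α))) (ENNReal.ofReal ε) +
        (volume (SupS g α) - ENNReal.ofReal ε) := by
  obtain ⟨b1, hb1, hIoc1⟩ := good_exists_Ioc hf (lt_of_lt_of_le hα ((le_add_self : α ≤ γ + α)))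
  obtain ⟨b2, hb2, hIoc2⟩ := good_exists_Ioc hf hα
  rw [sup_subInd hf.ni hγ hε hα, hIoc1, hIoc2]
  have h1 : Set.Ioc 0 ε ∩ Set.Ioc 0 b1 = Set.Ioc 0 (min ε b1) := by
    rw [Set.Ioc_inter_Ioc, max_self]
  have h2 : Set.Ioi ε ∩ Set.Ioc 0 b2 = Set.Ioc ε b2 := by
    ext t
    simp only [Set.mem_inter_iff, Set.mem_Ioi, Set.mem_Ioc]
    constructor
    · rintro ⟨h3, h4, h5⟩; exact ⟨h3, h5⟩
    · rintro ⟨h3, h5⟩; exact ⟨h3, hε.trans h3, h5⟩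
  rw [h1, h2]
  have hdisj : Disjoint (Set.Ioc (0:ℝ) (min ε b1)) (Set.Ioc ε b2) := by
    rw [Set.disjoint_left]
    rintro t ⟨ht1, ht2⟩ ⟨ht3, ht4⟩
    exact absurd (ht2.trans (min_le_left _ _)) (not_le.2 ht3)
  rw [measure_union hdisj measurableSet_Ioc]
  have e1 : volume (Set.Ioc (0:ℝ) (min ε b1)) = min (volume (Set.Ioc (0:ℝ) b1)) (ENNReal.ofReal ε) := by
    rw [Real.volume_Ioc, Real.volume_Ioc]
    rw [show (min ε b1 : ℝ) - 0 = min ε b1 by ring, show b1 - (0:ℝ) = b1 by ring]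
    rcases le_total ε b1 with h | h
    · rw [min_eq_left h, min_eq_right (ENNReal.ofReal_le_ofReal h)]
    · rw [min_eq_right h, min_eq_left (ENNReal.ofReal_le_ofReal h)]
  have e2 : volume (Set.Ioc ε b2) = volume (Set.Ioc (0:ℝ) b2) - ENNReal.ofReal ε := by
    rw [Real.volume_Ioc, Real.volume_Ioc, show b2 - (0:ℝ) = b2 by ring,
      ENNReal.ofReal_sub _ hε.le]
  rw [e1, e2]


lemma step_good_and_vol (hε : 0 < ε) (hf : Good g) (hγ : γ ≤ g ε) {G : ℝ → Ordinal}
    (hR : IsRearrangement G (subInd g γ (Set.Ioc 0 ε))) :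
    Good G ∧ (∀ α : Ordinal, 0 < α → volume (SupS G α) =
      min (volume (SupS g (γ + α))) (ENNReal.ofReal ε) +
        (volume (SupS g α) - ENNReal.ofReal ε)) := by
  have hufr := subInd_fr (γ := γ) (ε := ε) hf.fr
  have hulev := lev_subInd_measurable (γ := γ) hf.ni hγ hε
  have hvol : ∀ α : Ordinal, 0 < α → volume (SupS G α) =
      min (volume (SupS g (γ + α))) (ENNReal.ofReal ε) +
        (volume (SupS g α) - ENNReal.ofReal ε) := by
    intro α hα
    rw [rearr_sup_vol hR hufr hulev hα, vol_sup_subInd hf hγ hε hα]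
  refine ⟨⟨hR.1, hR.2.1, ?_, ?_⟩, hvol⟩
  · have hsub : G '' Set.Ioi 0 ⊆
        ((subInd g γ (Set.Ioc 0 ε)) '' Set.Ioi 0) ∪ {0} := by
      rintro β ⟨t, ht, rfl⟩
      by_cases h0 : G t = 0
      · exact Or.inr h0
      · exact Or.inl (rearr_range hR ht h0)
    exact (hufr.union (Set.finite_singleton 0)).subset hsub
  · intro α hα
    rw [hvol α hα]
    refine ENNReal.add_ne_top.2 ⟨?_, ?_⟩
    · exact ne_top_of_le_ne_top ENNReal.ofReal_ne_top (min_le_right _ _)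
    · exact ne_top_of_le_ne_top (hf.bdd α hα) (tsub_le_self)

end Step
-- ===== Part 5: greedy procedure utilities =====
open scoped ENNReal

section GP
variable {ε : ℝ} {g : ℕ → ℝ → Ordinal} {γ : ℕ → Ordinal} {n : ℕ}

lemma gp_shift (hgp : GreedyProcedure ε g γ (n + 1)) :
    GreedyProcedure ε (fun i => g (i + 1)) (fun i => γ (i + 1)) n := by
  obtain ⟨h1, h2, h3, h4⟩ := hgp
  refine ⟨fun i hi => h1 (i + 1) (by omega), h2, fun i hi => h3 (i + 1) (by omega),
    fun i hi => h4 (i + 1) (by omega)⟩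

lemma gp_good (hε : 0 < ε) (hgp : GreedyProcedure ε g γ n) (h0 : Good (g 0)) :
    ∀ i, i ≤ n → Good (g i) := by
  intro i
  induction i with
  | zero => intro _; exact h0
  | succ k ih =>
    intro hk
    have hklt : k < n := by omega
    have hgood := ih (by omega)
    exact (step_good_and_vol hε hgood ((hgp.2.2.1 k hklt).2.1) (hgp.2.2.2 k hklt)).1

lemma gp_step_vol (hε : 0 < ε) (hgp : GreedyProcedure ε g γ n) (h0 : Good (g 0))
    {i : ℕ} (hi : i < n) {α : Ordinal} (hα : 0 < α) :
    volume (SupS (g (i + 1)) α) =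
      min (volume (SupS (g i) (γ i + α))) (ENNReal.ofReal ε) +
        (volume (SupS (g i) α) - ENNReal.ofReal ε) :=
  (step_good_and_vol hε (gp_good hε hgp h0 i (by omega)) ((hgp.2.2.1 i hi).2.1)
    (hgp.2.2.2 i hi)).2 α hα

lemma gp_eps_mono (hε : 0 < ε) (hgp : GreedyProcedure ε g γ n) (h0 : Good (g 0))
    {i : ℕ} (hi : i < n) : g (i + 1) ε ≤ g i ε := by
  by_contra hlt
  push_neg at hlt
  set α := g (i + 1) ε with hα
  have hαpos : 0 < α := lt_of_le_of_lt (zero_le) hlt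
  have hgood := gp_good hε hgp h0 i (by omega)
  have hgood1 := gp_good hε hgp h0 (i + 1) (by omega)
  have h1 : ENNReal.ofReal ε ≤ volume (SupS (g (i + 1)) α) :=
    (mem_sup_iff hgood1 hαpos hε).1 (le_refl _)
  rw [gp_step_vol hε hgp h0 hi hαpos] at h1
  have h2 : volume (SupS (g i) α) < ENNReal.ofReal ε :=
    (not_mem_sup_iff hgood hαpos hε).1 hlt
  have h3 : volume (SupS (g i) (γ i + α)) ≤ volume (SupS (g i) α) :=
    measure_mono (SupS_anti _ ((le_add_self : α ≤ γ i + α)))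
  have h4 : min (volume (SupS (g i) (γ i + α))) (ENNReal.ofReal ε) +
      (volume (SupS (g i) α) - ENNReal.ofReal ε) < ENNReal.ofReal ε := by
    have h5 : volume (SupS (g i) α) - ENNReal.ofReal ε = 0 :=
      tsub_eq_zero_of_le h2.le
    rw [h5, add_zero]
    exact lt_of_le_of_lt (min_le_left _ _) (lt_of_le_of_lt h3 h2)
  exact absurd h1 (not_le.2 h4)

lemma gp_eps_le_zero (hε : 0 < ε) (hgp : GreedyProcedure ε g γ n) (h0 : Good (g 0)) :
    ∀ i, i ≤ n → g i ε ≤ g 0 ε := by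
  intro i
  induction i with
  | zero => intro _; exact le_refl _
  | succ k ih =>
    intro hk
    exact (gp_eps_mono hε hgp h0 (by omega : k < n)).trans (ih (by omega))

lemma step_pointwise (hε : 0 < ε) {f : ℝ → Ordinal} {γ' : Ordinal} (hf : Good f)
    (hγ : γ' ≤ f ε) {G : ℝ → Ordinal} (hR : IsRearrangement G (subInd f γ' (Set.Ioc 0 ε)))
    {t : ℝ} (ht : 0 < t) (htε : t ≤ ε) : f t ≤ γ' + G t := by
  obtain ⟨hGood, hvol⟩ := step_good_and_vol hε hf hγ hR
  set α := f t - γ' with hα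
  have hγt : γ' ≤ f t := gamma_le_on hf.ni hγ ht htε
  rcases eq_or_ne α 0 with h0 | h0
  · have : f t ≤ γ' := Ordinal.sub_eq_zero_iff_le.1 h0
    exact this.trans (le_self_add)
  · have hαpos : 0 < α := pos_iff_ne_zero.2 h0
    have hft : γ' + α = f t := Ordinal.add_sub_cancel_of_le hγt
    have h1 : ENNReal.ofReal t ≤ volume (SupS G α) := by
      rw [hvol α hαpos, hft]
      have h2 : ENNReal.ofReal t ≤ min (volume (SupS f (f t))) (ENNReal.ofReal ε) := by
        refine le_min ?_ (ENNReal.ofReal_le_ofReal htε)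
        refine (mem_sup_iff hf ?_ ht).1 (le_refl _)
        exact lt_of_lt_of_le hαpos (hft ▸ (le_add_self : α ≤ γ' + α) : α ≤ f t)
      exact h2.trans le_self_add
    have h3 : α ≤ G t := (mem_sup_iff hGood hαpos ht).2 h1
    calc f t = γ' + α := hft.symm
      _ ≤ γ' + G t := add_le_add_right h3 γ'

lemma osum_shift (γ : ℕ → Ordinal) : ∀ k, osum γ (k + 1) = γ 0 + osum (fun i => γ (i + 1)) k := by
  intro k
  induction k with
  | zero => simp [osum]
  | succ j ih =>
    show osum γ (j + 1) + γ (j + 1) = _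
    rw [ih, add_assoc]
    rfl

lemma osum_lt_of_principal {γ : ℕ → Ordinal} {c : Ordinal} (hc : Principal (· + ·) c)
    (hc0 : 0 < c) (n : ℕ) (hγ : ∀ i, i < n → γ i < c) : osum γ n < c := by
  induction n with
  | zero => exact hc0
  | succ k ih =>
    exact hc (ih (fun i hi => hγ i (by omega))) (hγ k (by omega))

lemma gp_mono_aux (hε : 0 < ε) :
    ∀ (n : ℕ) (g : ℕ → ℝ → Ordinal) (γ : ℕ → Ordinal), GreedyProcedure ε g γ n →
      Good (g 0) → ∀ t : ℝ, 0 < t → t ≤ ε → g 0 t ≤ osum γ n + g n t := by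
  intro n
  induction n with
  | zero => intro g γ _ _ t ht htε; simp [osum]
  | succ k ih =>
    intro g γ hgp h0 t ht htε
    have h1 : g 0 t ≤ γ 0 + g 1 t :=
      step_pointwise hε h0 ((hgp.2.2.1 0 (by omega)).2.1) (hgp.2.2.2 0 (by omega)) ht htε
    have hsh := gp_shift hgp
    have hgood1 : Good (g 1) := gp_good hε hgp h0 1 (by omega)
    have h2 := ih (fun i => g (i + 1)) (fun i => γ (i + 1)) hsh hgood1 t ht htε
    calc g 0 t ≤ γ 0 + g 1 t := h1
      _ ≤ γ 0 + (osum (fun i => γ (i + 1)) k + g (k + 1) t) := add_le_add_right h2 _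
      _ = osum γ (k + 1) + g (k + 1) t := by rw [osum_shift, add_assoc]

end GP
-- ===== Part 6: domination and the over-subtraction lemma =====
open scoped ENNReal

lemma le_of_sup_vol_le {f F : ℝ → Ordinal} (hf : Good f) (hF : Good F)
    (h : ∀ α : Ordinal, 0 < α → volume (SupS f α) ≤ volume (SupS F α)) :
    ∀ t : ℝ, 0 < t → f t ≤ F t := by
  intro t ht
  rcases eq_or_ne (f t) 0 with h0 | h0
  · rw [h0]; exact zero_le
  · have hpos : 0 < f t := pos_iff_ne_zero.2 h0
    refine (mem_sup_iff hF hpos ht).2 ?_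
    exact ((mem_sup_iff hf hpos ht).1 (le_refl _)).trans (h (f t) hpos)

lemma sup_vol_mono {f F : ℝ → Ordinal} (h : ∀ t, 0 < t → f t ≤ F t) (α : Ordinal) :
    volume (SupS f α) ≤ volume (SupS F α) := measure_mono (SupS_mono h α)

/-- same-γ steps preserve pointwise domination -/
lemma dom_step {ε : ℝ} (hε : 0 < ε) {f F : ℝ → Ordinal} {γ' : Ordinal}
    (hf : Good f) (hF : Good F) (hle : ∀ t, 0 < t → f t ≤ F t) (hγ : γ' ≤ f ε)
    {G H : ℝ → Ordinal} (hRG : IsRearrangement G (subInd f γ' (Set.Ioc 0 ε)))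
    (hRH : IsRearrangement H (subInd F γ' (Set.Ioc 0 ε))) :
    ∀ t, 0 < t → G t ≤ H t := by
  obtain ⟨hGoodG, hvolG⟩ := step_good_and_vol hε hf hγ hRG
  obtain ⟨hGoodH, hvolH⟩ := step_good_and_vol hε hF (hγ.trans (hle ε hε)) hRH
  refine le_of_sup_vol_le hGoodG hGoodH ?_
  intro α hα
  rw [hvolG α hα, hvolH α hα]
  exact add_le_add (min_le_min_right _ (sup_vol_mono hle _))
    (tsub_le_tsub_right (sup_vol_mono hle _) _)

/-- Lemma B' : over-subtraction comparison.  If `η` is a power of `ω` exceeding `g 0 ε`,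
then the η-shifted distribution of the final state `g n` is dominated by the distribution
of the rearrangement of `g 0 − η·1_{(0,ε]}`. -/
lemma lemB (ε : ℝ) (hε : 0 < ε) :
    ∀ (n : ℕ) (g : ℕ → ℝ → Ordinal) (γ : ℕ → Ordinal), GreedyProcedure ε g γ n →
      Good (g 0) → ∀ η : Ordinal, (∃ e : Ordinal, η = (ω : Ordinal) ^ e) → g 0 ε < η →
      ∀ β : Ordinal, 0 < β → ∀ t : ℝ, 0 < t → t ≤ ε →
      ENNReal.ofReal t ≤ volume (SupS (g n) (η + β)) →
      ENNReal.ofReal t ≤ min (volume (SupS (g 0) (η + β))) (ENNReal.ofReal ε) +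
        (volume (SupS (g 0) β) - ENNReal.ofReal ε) := by
  intro n
  induction n with
  | zero =>
    intro g γ _ h0 η _ _ β hβ t ht htε hc
    exact le_trans (le_min hc (ENNReal.ofReal_le_ofReal htε)) le_self_add
  | succ k ih =>
    intro g γ hgp h0 η hηpow hηgt β hβ t ht htε hc
    obtain ⟨e, he⟩ := hηpow
    have hγ0 : γ 0 ≤ g 0 ε := (hgp.2.2.1 0 (by omega)).2.1
    have hgood1 : Good (g 1) := gp_good hε hgp h0 1 (by omega)
    have hsh := gp_shift hgp
    have hη1 : g 1 ε < η := lt_of_le_of_lt (gp_eps_mono hε hgp h0 (by omega : 0 < k + 1)) hηgt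
    have hIH := ih (fun i => g (i + 1)) (fun i => γ (i + 1)) hsh hgood1 η ⟨e, he⟩ hη1 β hβ
      t ht htε hc
    -- rewrite the c₁ quantities via the step formula
    have habs : γ 0 + (η + β) = η + β := by
      rw [he]
      exact Ordinal.add_absorp (lt_of_le_of_lt hγ0 (he ▸ hηgt)) (le_self_add)
    have h1 : volume (SupS (g 1) (η + β)) = volume (SupS (g 0) (η + β)) := by
      rw [gp_step_vol hε hgp h0 (by omega : 0 < k + 1)
        (lt_of_lt_of_le hβ ((le_add_self : β ≤ η + β))), habs, min_add_tsub]
    have h2 : volume (SupS (g 1) β) =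
        min (volume (SupS (g 0) (γ 0 + β))) (ENNReal.ofReal ε) +
          (volume (SupS (g 0) β) - ENNReal.ofReal ε) :=
      gp_step_vol hε hgp h0 (by omega : 0 < k + 1) hβ
    rw [h1, h2] at hIH
    refine hIH.trans (add_le_add_right ?_ _)
    rw [tsub_le_iff_left]
    exact add_le_add_left (min_le_right _ _) _
-- ===== Part 7: propagation of the measure condition =====
open scoped ENNReal

/-- strict inequality set -/
def Dset (f F : ℝ → Ordinal) : Set ℝ := {t | 0 < t ∧ f t < F t}
/-- agreement set (at nonzero values) -/
def Eset (f F : ℝ → Ordinal) : Set ℝ := {t | 0 < t ∧ f t = F t ∧ F t ≠ 0}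

section DE
variable {f F : ℝ → Ordinal} {𝔽 : Finset Ordinal}

lemma Dset_eq (hcovF : ∀ t : ℝ, 0 < t → F t ≠ 0 → F t ∈ 𝔽) :
    Dset f F = ⋃ β ∈ 𝔽.filter (0 < ·), (SupS F β \ SupS f β) := by
  ext t
  simp only [Dset, Set.mem_setOf_eq, Set.mem_iUnion, Finset.mem_filter, Set.mem_diff,
    SupS, not_and, not_le]
  constructor
  · rintro ⟨ht, hlt⟩
    have h0 : F t ≠ 0 := fun h => by rw [h] at hlt; exact absurd hlt (not_lt_zero)
    exact ⟨F t, ⟨hcovF t ht h0, pos_iff_ne_zero.2 h0⟩, ⟨ht, le_refl _⟩,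
      fun _ => hlt⟩
  · rintro ⟨β, ⟨hβ𝔽, hβ0⟩, ⟨ht, hβF⟩, hft⟩
    exact ⟨ht, lt_of_lt_of_le (hft ht) hβF⟩

lemma Eset_eq (hcovF : ∀ t : ℝ, 0 < t → F t ≠ 0 → F t ∈ 𝔽) :
    Eset f F = ⋃ β ∈ 𝔽.filter (0 < ·), (lev f β ∩ lev F β) := by
  ext t
  simp only [Eset, Set.mem_setOf_eq, Set.mem_iUnion, Finset.mem_filter, Set.mem_inter_iff, lev]
  constructor
  · rintro ⟨ht, heq, h0⟩
    exact ⟨F t, ⟨hcovF t ht h0, pos_iff_ne_zero.2 h0⟩, ⟨ht, heq⟩, ⟨ht, rfl⟩⟩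
  · rintro ⟨β, ⟨hβ𝔽, hβ0⟩, ⟨ht, h1⟩, ⟨_, h2⟩⟩
    exact ⟨ht, h1.trans h2.symm, by rw [h2]; exact pos_iff_ne_zero.1 hβ0⟩

lemma DE_union (hle : ∀ t, 0 < t → f t ≤ F t) :
    Dset f F ∪ Eset f F = SupS F 1 := by
  ext t
  simp only [Dset, Eset, Set.mem_union, Set.mem_setOf_eq, SupS]
  constructor
  · rintro (⟨ht, hlt⟩ | ⟨ht, heq, h0⟩)
    · refine ⟨ht, Ordinal.one_le_iff_ne_zero.2 ?_⟩
      intro h0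
      rw [h0] at hlt
      exact absurd hlt (not_lt_zero)
    · exact ⟨ht, Ordinal.one_le_iff_ne_zero.2 h0⟩
  · rintro ⟨ht, h1⟩
    rcases lt_or_eq_of_le (hle t ht) with h | h
    · exact Or.inl ⟨ht, h⟩
    · exact Or.inr ⟨ht, h, Ordinal.one_le_iff_ne_zero.1 h1⟩

lemma DE_disjoint : Disjoint (Dset f F) (Eset f F) := by
  rw [Set.disjoint_left]
  rintro t ⟨ht, hlt⟩ ⟨_, heq, _⟩
  exact absurd heq (ne_of_lt hlt)

lemma Dset_measurable (hcovF : ∀ t : ℝ, 0 < t → F t ≠ 0 → F t ∈ 𝔽)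
    (hmf : ∀ β : Ordinal, 0 < β → MeasurableSet (SupS f β))
    (hmF : ∀ β : Ordinal, 0 < β → MeasurableSet (SupS F β)) :
    MeasurableSet (Dset f F) := by
  rw [Dset_eq hcovF]
  exact (𝔽.filter (0 < ·)).measurableSet_biUnion
    (fun β hβ => (hmF β (Finset.mem_filter.1 hβ).2).diff (hmf β (Finset.mem_filter.1 hβ).2))

lemma Eset_measurable (hcovF : ∀ t : ℝ, 0 < t → F t ≠ 0 → F t ∈ 𝔽)
    (hmf : ∀ β : Ordinal, MeasurableSet (lev f β))
    (hmF : ∀ β : Ordinal, MeasurableSet (lev F β)) :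
    MeasurableSet (Eset f F) := by
  rw [Eset_eq hcovF]
  exact (𝔽.filter (0 < ·)).measurableSet_biUnion (fun β hβ => (hmf β).inter (hmF β))

lemma volD_add_volE (hle : ∀ t, 0 < t → f t ≤ F t)
    (hDm : MeasurableSet (Dset f F)) (hEm : MeasurableSet (Eset f F)) :
    volume (SupS F 1) = volume (Dset f F) + volume (Eset f F) := by
  rw [← DE_union hle, measure_union DE_disjoint hEm]

lemma volE_eq_sum (hcovF : ∀ t : ℝ, 0 < t → F t ≠ 0 → F t ∈ 𝔽)
    (hmf : ∀ β : Ordinal, MeasurableSet (lev f β))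
    (hmF : ∀ β : Ordinal, MeasurableSet (lev F β)) :
    volume (Eset f F) = ∑ β ∈ 𝔽.filter (0 < ·), volume (lev f β ∩ lev F β) := by
  rw [Eset_eq hcovF]
  exact measure_biUnion_finset
    (fun β hβ β' hβ' hne => (lev_disjoint F hne).mono (Set.inter_subset_right)
      (Set.inter_subset_right))
    (fun β _ => (hmf β).inter (hmF β))

lemma lev_inter_eq (hle : ∀ t, 0 < t → f t ≤ F t) (β : Ordinal) :
    lev f β ∩ lev F β = SupS f β \ SupS F (β + 1) := by
  ext t
  simp only [lev, Set.mem_inter_iff, Set.mem_setOf_eq, Set.mem_diff, SupS, not_and, not_le]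
  constructor
  · rintro ⟨⟨ht, h1⟩, ⟨_, h2⟩⟩
    exact ⟨⟨ht, h1.ge⟩, fun _ => by rw [h2]; exact Order.lt_add_one_iff.2 (le_refl _)⟩
  · rintro ⟨⟨ht, h1⟩, h2⟩
    have h3 : F t ≤ β := Order.lt_add_one_iff.1 (h2 ht)
    have h4 : f t = β := le_antisymm ((hle t ht).trans h3) h1
    exact ⟨⟨ht, h4⟩, ⟨ht, le_antisymm h3 (h4 ▸ h1.trans (hle t ht) : β ≤ F t)⟩⟩

lemma vol_lev_inter_ge (hle : ∀ t, 0 < t → f t ≤ F t) (β : Ordinal) :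
    volume (SupS f β) - volume (SupS F (β + 1)) ≤ volume (lev f β ∩ lev F β) := by
  rw [lev_inter_eq hle β, tsub_le_iff_right]
  calc volume (SupS f β) ≤ volume ((SupS f β \ SupS F (β + 1)) ∪ SupS F (β + 1)) :=
        measure_mono (fun t ht => by
          by_cases h : t ∈ SupS F (β + 1)
          · exact Or.inr h
          · exact Or.inl ⟨ht, h⟩)
    _ ≤ _ := measure_union_le _ _

lemma vol_lev_inter_sorted {G H : ℝ → Ordinal} (hG : Good G) (hH : Good H)
    (hle : ∀ t, 0 < t → G t ≤ H t) {β : Ordinal} (hβ : 0 < β) :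
    volume (lev G β ∩ lev H β) = volume (SupS G β) - volume (SupS H (β + 1)) := by
  have hβ1 : (0:Ordinal) < β + 1 := lt_of_lt_of_le hβ ((le_self_add : β ≤ β + 1))
  obtain ⟨a, ha, hIa⟩ := good_exists_Ioc hG hβ
  obtain ⟨b, hb, hIb⟩ := good_exists_Ioc hH hβ1
  rw [lev_inter_eq hle β, hIa, hIb]
  have hdiff : Set.Ioc (0:ℝ) a \ Set.Ioc 0 b = Set.Ioc b a := by
    ext t
    simp only [Set.mem_diff, Set.mem_Ioc, not_and, not_le]
    constructor
    · rintro ⟨⟨ht, hta⟩, h2⟩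
      exact ⟨h2 ht, hta⟩
    · rintro ⟨htb, hta⟩
      have ht : 0 < t := lt_of_le_of_lt hb htb
      exact ⟨⟨ht, hta⟩, fun _ => htb⟩
  rw [hdiff, Real.volume_Ioc, Real.volume_Ioc, Real.volume_Ioc]
  rw [show a - (0:ℝ) = a by ring, show b - (0:ℝ) = b by ring]
  exact ENNReal.ofReal_sub a hb

end DE
-- ===== Part 8: the propagation theorem =====
open scoped ENNReal

section Prop8
variable {ε : ℝ} {f F : ℝ → Ordinal} {γ' : Ordinal}

lemma sup_subInd_measurable (hni : NonIncr f) (hγ : γ' ≤ f ε) (hε : 0 < ε)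
    {α : Ordinal} (hα : 0 < α) : MeasurableSet (SupS (subInd f γ' (Set.Ioc 0 ε)) α) := by
  rw [sup_subInd hni hγ hε hα]
  exact (measurableSet_Ioc.inter (supS_measurable hni _)).union
    (measurableSet_Ioi.inter (supS_measurable hni _))

lemma subInd_mono (hle : ∀ t, 0 < t → f t ≤ F t) :
    ∀ t, 0 < t → subInd f γ' (Set.Ioc 0 ε) t ≤ subInd F γ' (Set.Ioc 0 ε) t := by
  intro t ht
  by_cases htm : t ∈ Set.Ioc 0 ε
  · rw [subInd_apply_mem htm, subInd_apply_mem htm]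
    exact ord_sub_le_sub (hle t ht) γ'
  · rw [subInd_apply_not_mem htm, subInd_apply_not_mem htm]
    exact hle t ht

lemma Dset_subInd (hf : NonIncr f) (hF : NonIncr F) (hγf : γ' ≤ f ε) (hγF : γ' ≤ F ε)
    (hε : 0 < ε) :
    Dset (subInd f γ' (Set.Ioc 0 ε)) (subInd F γ' (Set.Ioc 0 ε)) = Dset f F := by
  ext t
  simp only [Dset, Set.mem_setOf_eq]
  constructor
  · rintro ⟨ht, hlt⟩
    refine ⟨ht, ?_⟩
    by_cases htm : t ∈ Set.Ioc 0 ε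
    · rw [subInd_apply_mem htm, subInd_apply_mem htm] at hlt
      exact (ord_sub_lt_sub_iff (gamma_le_on hf hγf htm.1 htm.2)
        (gamma_le_on hF hγF htm.1 htm.2)).1 hlt
    · rwa [subInd_apply_not_mem htm, subInd_apply_not_mem htm] at hlt
  · rintro ⟨ht, hlt⟩
    refine ⟨ht, ?_⟩
    by_cases htm : t ∈ Set.Ioc 0 ε
    · rw [subInd_apply_mem htm, subInd_apply_mem htm]
      exact (ord_sub_lt_sub_iff (gamma_le_on hf hγf htm.1 htm.2)
        (gamma_le_on hF hγF htm.1 htm.2)).2 hlt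
    · rwa [subInd_apply_not_mem htm, subInd_apply_not_mem htm]

theorem meas_propagation (hε : 0 < ε) (hf : Good f) (hF : Good F)
    (hle : ∀ t, 0 < t → f t ≤ F t) (hγ : γ' ≤ f ε)
    {G H : ℝ → Ordinal} (hRG : IsRearrangement G (subInd f γ' (Set.Ioc 0 ε)))
    (hRH : IsRearrangement H (subInd F γ' (Set.Ioc 0 ε))) :
    volume (Dset f F) ≤ volume (Dset G H) := by
  classical
  set u := subInd f γ' (Set.Ioc 0 ε) with hu
  set v := subInd F γ' (Set.Ioc 0 ε) with hv
  have hγF : γ' ≤ F ε := hγ.trans (hle ε hε)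
  obtain ⟨hGoodG, hvolG⟩ := step_good_and_vol hε hf hγ hRG
  obtain ⟨hGoodH, hvolH⟩ := step_good_and_vol hε hF hγF hRH
  have hGH : ∀ t, 0 < t → G t ≤ H t := dom_step hε hf hF hle hγ hRG hRH
  have huv : ∀ t, 0 < t → u t ≤ v t := subInd_mono hle
  have hufr : (u '' Set.Ioi 0).Finite := subInd_fr hf.fr
  have hvfr : (v '' Set.Ioi 0).Finite := subInd_fr hF.fr
  set 𝔽 := (hufr.union hvfr).toFinset with h𝔽
  have hcovv : ∀ t : ℝ, 0 < t → v t ≠ 0 → v t ∈ 𝔽 := by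
    intro t ht _
    rw [h𝔽, Set.Finite.mem_toFinset]
    exact Or.inr ⟨t, ht, rfl⟩
  have hcovH : ∀ t : ℝ, 0 < t → H t ≠ 0 → H t ∈ 𝔽 := by
    intro t ht h0
    rw [h𝔽, Set.Finite.mem_toFinset]
    exact Or.inr (rearr_range hRH ht h0)
  -- measurability packages
  have hmulev : ∀ β : Ordinal, MeasurableSet (lev u β) := lev_subInd_measurable hf.ni hγ hε
  have hmvlev : ∀ β : Ordinal, MeasurableSet (lev v β) := lev_subInd_measurable hF.ni hγF hε
  have hmusup : ∀ β : Ordinal, 0 < β → MeasurableSet (SupS u β) :=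
    fun β hβ => sup_subInd_measurable hf.ni hγ hε hβ
  have hmvsup : ∀ β : Ordinal, 0 < β → MeasurableSet (SupS v β) :=
    fun β hβ => sup_subInd_measurable hF.ni hγF hε hβ
  -- the two decompositions of vol (SupS v 1) = vol (SupS H 1)
  have h1 : volume (SupS v 1) = volume (Dset u v) + volume (Eset u v) :=
    volD_add_volE huv (Dset_measurable hcovv hmusup hmvsup)
      (Eset_measurable hcovv hmulev hmvlev)
  have hHv : ∀ β : Ordinal, 0 < β → volume (SupS H β) = volume (SupS v β) :=
    fun β hβ => rearr_sup_vol hRH hvfr hmvlev hβ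
  have hGu : ∀ β : Ordinal, 0 < β → volume (SupS G β) = volume (SupS u β) :=
    fun β hβ => rearr_sup_vol hRG hufr hmulev hβ
  have h2 : volume (SupS v 1) = volume (Dset G H) + volume (Eset G H) := by
    rw [← hHv 1 one_pos]
    exact volD_add_volE hGH
      (Dset_measurable hcovH (fun β hβ => supS_measurable hGoodG.ni β)
        (fun β hβ => supS_measurable hGoodH.ni β))
      (Eset_measurable hcovH (lev_measurable hGoodG.ni) (lev_measurable hGoodH.ni))
  -- compare the agreement parts
  have hE : volume (Eset G H) ≤ volume (Eset u v) := by
    rw [volE_eq_sum hcovH (lev_measurable hGoodG.ni) (lev_measurable hGoodH.ni),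
      volE_eq_sum hcovv hmulev hmvlev]
    refine Finset.sum_le_sum ?_
    intro β hβ
    have hβ0 : (0:Ordinal) < β := (Finset.mem_filter.1 hβ).2
    have hβ1 : (0:Ordinal) < β + 1 := lt_of_lt_of_le hβ0 ((le_self_add : β ≤ β + 1))
    calc volume (lev G β ∩ lev H β)
        = volume (SupS G β) - volume (SupS H (β + 1)) :=
          vol_lev_inter_sorted hGoodG hGoodH hGH hβ0
      _ = volume (SupS u β) - volume (SupS v (β + 1)) := by rw [hGu β hβ0, hHv _ hβ1]
      _ ≤ volume (lev u β ∩ lev v β) := vol_lev_inter_ge huv β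
  -- cancel
  have hfin : volume (Eset u v) ≠ ⊤ := by
    refine ne_top_of_le_ne_top ?_ (measure_mono (?_ : Eset u v ⊆ SupS v 1))
    · rw [hv, vol_sup_subInd hF hγF hε one_pos]
      refine ENNReal.add_ne_top.2 ⟨?_, ?_⟩
      · exact ne_top_of_le_ne_top ENNReal.ofReal_ne_top (min_le_right _ _)
      · exact ne_top_of_le_ne_top (hF.bdd 1 one_pos) tsub_le_self
    · intro t ht
      exact ⟨ht.1, Ordinal.one_le_iff_ne_zero.2 ht.2.2⟩
  have h3 : volume (Dset u v) + volume (Eset u v) ≤ volume (Dset G H) + volume (Eset u v) := by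
    calc volume (Dset u v) + volume (Eset u v) = volume (Dset G H) + volume (Eset G H) := by
          rw [← h1, h2]
      _ ≤ volume (Dset G H) + volume (Eset u v) := add_le_add_right hE _
  have h4 : volume (Dset u v) ≤ volume (Dset G H) :=
    ENNReal.add_le_add_iff_right hfin |>.1 h3
  calc volume (Dset f F) = volume (Dset u v) := by
        rw [hu, hv, Dset_subInd hf.ni hF.ni hγ hγF hε]
    _ ≤ volume (Dset G H) := h4
end Prop8
-- ===== Part 9: main induction =====
open scoped ENNReal

theorem main_induction (ε : ℝ) (hε : 0 < ε) :
    ∀ m : ℕ, ∀ (g h : ℕ → ℝ → Ordinal) (γ η : ℕ → Ordinal) (n : ℕ),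
      Good (g 0) → Good (h 0) → (∀ t, 0 < t → g 0 t ≤ h 0 t) →
      GreedyProcedure ε g γ n → GreedyProcedure ε h η m →
      (∀ t : ℝ, 0 < t → t ≤ ε → osum γ n + g n t ≤ osum η m + h m t) ∧
      (ENNReal.ofReal ε ≤ volume (Dset (g 0) (h 0)) → osum γ n + 1 ≤ osum η m) := by
  intro m
  induction m with
  | zero =>
    intro g h γ η n hGg hGh hle hgpg hgph
    have hh0 : h 0 ε = 0 := hgph.2.1
    have hn0 : n = 0 := by
      by_contra hn
      have h1 : g 0 ε ≠ 0 := hgpg.1 0 (by omega)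
      have h2 : g 0 ε ≤ h 0 ε := hle ε hε
      rw [hh0, nonpos_iff_eq_zero] at h2
      exact h1 h2
    subst hn0
    constructor
    · intro t ht htε
      show osum γ 0 + g 0 t ≤ osum η 0 + h 0 t
      simp only [osum, zero_add]
      exact hle t ht
    · intro hcond
      exfalso
      have hsub : Dset (g 0) (h 0) ⊆ SupS (h 0) 1 := by
        intro t ht
        have h2 := ht.2
        refine ⟨ht.1, Ordinal.one_le_iff_ne_zero.2 ?_⟩
        intro h0
        rw [h0] at h2
        exact absurd h2 (not_lt_zero)
      have h1 : (1:Ordinal) ≤ h 0 ε :=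
        (mem_sup_iff hGh one_pos hε).2 (hcond.trans (measure_mono hsub))
      rw [hh0] at h1
      exact absurd h1 (by simp)
  | succ m' ih =>
    intro g h γ η n hGg hGh hle hgpg hgph
    have hη0 := hgph.2.2.1 0 (by omega)
    obtain ⟨⟨e, he⟩, hη0le, hη0max⟩ := hη0
    have hGoodh1 : Good (h 1) := gp_good hε hgph hGh 1 (by omega)
    have hshh := gp_shift hgph
    have hη0one : (1:Ordinal) ≤ η 0 := by
      rw [he]; exact Ordinal.one_le_iff_ne_zero.2 (Ordinal.opow_pos e Ordinal.omega0_pos).ne'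
    rcases Nat.eq_zero_or_pos n with hn0 | hnpos
    · subst hn0
      constructor
      · intro t ht htε
        show osum γ 0 + g 0 t ≤ _
        simp only [osum, zero_add]
        exact (hle t ht).trans (gp_mono_aux hε (m' + 1) h η hgph hGh t ht htε)
      · intro _
        show osum γ 0 + 1 ≤ osum η (m' + 1)
        simp only [osum, zero_add]
        calc (1:Ordinal) ≤ η 0 := hη0one
          _ ≤ η 0 + osum (fun i => η (i + 1)) m' := le_self_add
          _ = osum η (m' + 1) := (osum_shift η m').symm
    · obtain ⟨k, rfl⟩ : ∃ k, n = k + 1 := ⟨n - 1, by omega⟩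
      have hγ0 := hgpg.2.2.1 0 (by omega)
      obtain ⟨⟨e', he'⟩, hγ0le, hγ0max⟩ := hγ0
      have hγ0η0 : γ 0 ≤ η 0 := by
        rw [he']
        exact hη0max e' (he' ▸ hγ0le.trans (hle ε hε))
      have hGoodg1 : Good (g 1) := gp_good hε hgpg hGg 1 (by omega)
      have hshg := gp_shift hgpg
      have hRG := hgpg.2.2.2 0 (by omega)
      have hRH := hgph.2.2.2 0 (by omega)
      rcases lt_or_eq_of_le hγ0η0 with hlt | heq
      -- case γ 0 < η 0
      · have hgelt : g 0 ε < η 0 := by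
          by_contra hge
          push_neg at hge
          have := hγ0max e (he ▸ hge)
          rw [← he] at this
          exact absurd hlt (not_lt.2 this)
        have hallγ : ∀ i, i < k + 1 → γ i < η 0 := by
          intro i hi
          calc γ i ≤ g i ε := (hgpg.2.2.1 i hi).2.1
            _ ≤ g 0 ε := gp_eps_le_zero hε hgpg hGg i (by omega)
            _ < η 0 := hgelt
        have hosumlt : osum γ (k + 1) < η 0 := by
          rw [he]
          exact osum_lt_of_principal (Ordinal.principal_add_omega0_opow e)
            (Ordinal.opow_pos e Ordinal.omega0_pos) (k + 1) (fun i hi => he ▸ hallγ i hi)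
        obtain ⟨hGH1, hvolH1⟩ := step_good_and_vol hε hGh hη0le hRH
        have hkey : ∀ t : ℝ, 0 < t → t ≤ ε → g (k + 1) t - η 0 ≤ h 1 t := by
          intro t ht htε
          set β := g (k + 1) t - η 0 with hβdef
          rcases eq_or_ne β 0 with hβ0 | hβ0
          · rw [hβ0]; exact zero_le
          · have hβpos : 0 < β := pos_iff_ne_zero.2 hβ0
            have hηle : η 0 ≤ g (k + 1) t := by
              by_contra hnle
              push_neg at hnle
              exact hβ0 (Ordinal.sub_eq_zero_iff_le.2 hnle.le)
            have heq2 : η 0 + β = g (k + 1) t := Ordinal.add_sub_cancel_of_le hηle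
            have hGoodgn : Good (g (k + 1)) := gp_good hε hgpg hGg (k + 1) (by omega)
            have hc : ENNReal.ofReal t ≤ volume (SupS (g (k + 1)) (η 0 + β)) := by
              refine (mem_sup_iff hGoodgn (lt_of_lt_of_le hβpos ((le_add_self : β ≤ η 0 + β))) ht).1 ?_
              rw [heq2]
            have hB := lemB ε hε (k + 1) g γ hgpg hGg (η 0) ⟨e, he⟩ hgelt β hβpos t ht htε hc
            have hmono : min (volume (SupS (g 0) (η 0 + β))) (ENNReal.ofReal ε) +
                (volume (SupS (g 0) β) - ENNReal.ofReal ε) ≤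
                min (volume (SupS (h 0) (η 0 + β))) (ENNReal.ofReal ε) +
                  (volume (SupS (h 0) β) - ENNReal.ofReal ε) :=
              add_le_add (min_le_min_right _ (sup_vol_mono hle _))
                (tsub_le_tsub_right (sup_vol_mono hle _) _)
            have hfinal : ENNReal.ofReal t ≤ volume (SupS (h 1) β) := by
              rw [hvolH1 β hβpos]
              exact hB.trans hmono
            exact (mem_sup_iff hGoodh1 hβpos ht).2 hfinal
        constructor
        · intro t ht htε
          calc osum γ (k + 1) + g (k + 1) t
              ≤ osum γ (k + 1) + (η 0 + (g (k + 1) t - η 0)) :=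
                add_le_add_right (Ordinal.le_add_sub _ _) _
            _ = (osum γ (k + 1) + η 0) + (g (k + 1) t - η 0) := by rw [add_assoc]
            _ = η 0 + (g (k + 1) t - η 0) := by
                rw [Ordinal.add_absorp (he ▸ hosumlt) (le_of_eq he.symm)]
            _ ≤ η 0 + (osum (fun i => η (i + 1)) m' + h (m' + 1) t) := by
                refine add_le_add_right ?_ _
                exact (hkey t ht htε).trans
                  (gp_mono_aux hε m' (fun i => h (i + 1)) (fun i => η (i + 1)) hshh
                    hGoodh1 t ht htε)
            _ = osum η (m' + 1) + h (m' + 1) t := by rw [osum_shift, add_assoc]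
        · intro _
          calc osum γ (k + 1) + 1 ≤ η 0 := by
                rw [Ordinal.add_one_eq_succ, Order.succ_le_iff]
                exact hosumlt
            _ ≤ η 0 + osum (fun i => η (i + 1)) m' := le_self_add
            _ = osum η (m' + 1) := (osum_shift η m').symm
      -- case γ 0 = η 0
      · have hRH' : IsRearrangement (h 1) (subInd (h 0) (γ 0) (Set.Ioc 0 ε)) := by
          rw [heq]; exact hRH
        have hle1 : ∀ t, 0 < t → g 1 t ≤ h 1 t :=
          dom_step hε hGg hGh hle hγ0le hRG hRH'
        obtain ⟨IHa, IHb⟩ := ih (fun i => g (i + 1)) (fun i => h (i + 1))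
          (fun i => γ (i + 1)) (fun i => η (i + 1)) k hGoodg1 hGoodh1 hle1 hshg hshh
        constructor
        · intro t ht htε
          have h1 := IHa t ht htε
          calc osum γ (k + 1) + g (k + 1) t
              = γ 0 + (osum (fun i => γ (i + 1)) k + g (k + 1) t) := by
                rw [osum_shift, add_assoc]
            _ ≤ γ 0 + (osum (fun i => η (i + 1)) m' + h (m' + 1) t) := add_le_add_right h1 _
            _ = osum η (m' + 1) + h (m' + 1) t := by rw [heq, osum_shift, add_assoc]
        · intro hcond
          have hprop : ENNReal.ofReal ε ≤ volume (Dset (g 1) (h 1)) :=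
            hcond.trans (meas_propagation hε hGg hGh hle hγ0le hRG hRH')
          have h1 := IHb hprop
          calc osum γ (k + 1) + 1
              = γ 0 + (osum (fun i => γ (i + 1)) k + 1) := by rw [osum_shift, add_assoc]
            _ ≤ γ 0 + osum (fun i => η (i + 1)) m' := add_le_add_right h1 _
            _ = osum η (m' + 1) := by rw [heq, osum_shift]
-- ===== Part 10: final theorem =====
open scoped ENNReal

/-- Proposition 3.5, comparison part. -/
theorem stmt_3 (ε A : ℝ) (hε : 0 < ε)
    (g h : ℕ → ℝ → Ordinal) (γ η : ℕ → Ordinal) (n m : ℕ)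
    (hg₀NI : NonIncr (g 0)) (hg₀LC : LeftCont (g 0)) (hg₀FR : FiniteRange (g 0))
    (hg₀CV : CountableValued (g 0))
    (hh₀NI : NonIncr (h 0)) (hh₀LC : LeftCont (h 0)) (hh₀FR : FiniteRange (h 0))
    (hh₀CV : CountableValued (h 0))
    (hvan : ∀ t : ℝ, A < t → g 0 t = 0 ∧ h 0 t = 0)
    (hle : ∀ t : ℝ, 0 < t → g 0 t ≤ h 0 t)
    (hgreedyg : GreedyProcedure ε g γ n)
    (hgreedyh : GreedyProcedure ε h η m) :
    (∀ t : ℝ, 0 < t → t ≤ ε → osum γ n + g n t ≤ osum η m + h m t) ∧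
      (ENNReal.ofReal ε ≤ volume {t : ℝ | 0 < t ∧ g 0 t + 1 ≤ h 0 t} →
        osum γ n + g n ε + 1 ≤ osum η m + h m ε) := by
  have hbdd : ∀ f : ℕ → ℝ → Ordinal, (∀ t : ℝ, A < t → f 0 t = 0) →
      ∀ α : Ordinal, 0 < α → volume (SupS (f 0) α) ≠ ⊤ := by
    intro f hv α hα
    have hsub : SupS (f 0) α ⊆ Set.Ioc 0 A := by
      intro t ht
      refine ⟨ht.1, ?_⟩
      by_contra hA
      push_neg at hA
      have h0 := hv t hA
      have h2 := ht.2
      rw [h0] at h2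
      exact absurd (lt_of_lt_of_le hα h2) (lt_irrefl 0)
    refine ne_top_of_le_ne_top ?_ (measure_mono hsub)
    rw [Real.volume_Ioc]
    exact ENNReal.ofReal_ne_top
  have hGg : Good (g 0) := ⟨hg₀NI, hg₀LC, hg₀FR, hbdd g (fun t ht => (hvan t ht).1)⟩
  have hGh : Good (h 0) := ⟨hh₀NI, hh₀LC, hh₀FR, hbdd h (fun t ht => (hvan t ht).2)⟩
  obtain ⟨Pa, Pb⟩ := main_induction ε hε m g h γ η n hGg hGh hle hgreedyg hgreedyh
  refine ⟨Pa, ?_⟩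
  intro hcond
  have hDeq : {t : ℝ | 0 < t ∧ g 0 t + 1 ≤ h 0 t} = Dset (g 0) (h 0) := by
    ext t
    simp only [Set.mem_setOf_eq, Dset, Ordinal.add_one_eq_succ, Order.succ_le_iff]
  rw [hDeq] at hcond
  have h1 := Pb hcond
  rw [hgreedyg.2.1, hgreedyh.2.1, add_zero, add_zero]
  exact h1
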